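/- Let k ≥ 2 be an integer, G a finite simple graph, and for C ⊆ V(G) define W(C) = (1 − |C|·(2k−1)/(k·(3k−2))) · E(C), where E(C) is the number of edges with both endpoints in C. Then max over all C ⊆ V(G) of W(C) equals k·(k−1)²/(6k−4) if and only if G contains a clique of size k. -/

import Mathlib

open SimpleGraph Finset

private lemma key_le (k n : ℕ) (hk : 2 ≤ k) :
    (n:ℝ)*((n:ℝ)-1)*((k:ℝ)*(3*(k:ℝ)-2) - (n:ℝ)*(2*(k:ℝ)-1)) ≤ (k:ℝ)^2*((k:ℝ)-1)^2 := by
  rcases lt_trichotomy n k with h | h | h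
  · obtain ⟨s, hs⟩ : ∃ s, k = n + 1 + s := ⟨k - n - 1, by omega⟩
    subst hs
    have hn : (0:ℝ) ≤ (n:ℝ) := Nat.cast_nonneg n
    have hs' : (0:ℝ) ≤ (s:ℝ) := Nat.cast_nonneg s
    push_cast
    nlinarith [mul_nonneg hn hs', mul_nonneg (mul_nonneg hn hs') hs',
      mul_nonneg (mul_nonneg hn hn) hs', sq_nonneg ((n:ℝ)*(s:ℝ)),
      mul_nonneg (mul_nonneg hn hn) (mul_nonneg hs' hs'),
      mul_nonneg hs' (mul_nonneg hs' hs'),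
      mul_nonneg (mul_nonneg hs' hs') (mul_nonneg hs' hs'),
      mul_nonneg hn (mul_nonneg hs' (mul_nonneg hs' hs'))]
  · rw [h]; nlinarith [sq_nonneg ((k:ℝ)-1)]
  · obtain ⟨m, hm⟩ : ∃ m, n = k + 1 + m := ⟨n - k - 1, by omega⟩
    subst hm
    have hm' : (0:ℝ) ≤ (m:ℝ) := Nat.cast_nonneg m
    have hk' : (2:ℝ) ≤ (k:ℝ) := by exact_mod_cast hk
    push_cast
    nlinarith [mul_nonneg hm' hm', mul_nonneg (mul_nonneg hm' hm') hm',
      mul_nonneg (sub_nonneg.mpr hk') (mul_nonneg (mul_nonneg hm' hm') hm'),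
      mul_nonneg (sub_nonneg.mpr hk') (mul_nonneg hm' hm'),
      mul_nonneg (sub_nonneg.mpr hk') hm', sq_nonneg ((k:ℝ)*((m:ℝ)+1))]

private lemma key_lt (k n : ℕ) (hk : 2 ≤ k) (hne : n ≠ k) :
    (n:ℝ)*((n:ℝ)-1)*((k:ℝ)*(3*(k:ℝ)-2) - (n:ℝ)*(2*(k:ℝ)-1)) < (k:ℝ)^2*((k:ℝ)-1)^2 := by
  rcases lt_or_gt_of_ne hne with h | h
  · obtain ⟨s, hs⟩ : ∃ s, k = n + 1 + s := ⟨k - n - 1, by omega⟩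
    subst hs
    have hn : (0:ℝ) ≤ (n:ℝ) := Nat.cast_nonneg n
    have hs' : (0:ℝ) ≤ (s:ℝ) := Nat.cast_nonneg s
    have h1 : 1 ≤ (n:ℝ) + (s:ℝ) := by
      have : 1 ≤ n + s := by omega
      exact_mod_cast this
    push_cast
    nlinarith [mul_nonneg hn hs', mul_nonneg (mul_nonneg hn hs') hs',
      mul_nonneg (mul_nonneg hn hn) hs', sq_nonneg ((n:ℝ)*(s:ℝ)),
      mul_nonneg (mul_nonneg hn hn) (mul_nonneg hs' hs'),
      mul_nonneg hs' (mul_nonneg hs' hs'),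
      mul_nonneg (mul_nonneg hs' hs') (mul_nonneg hs' hs'),
      mul_nonneg hn (mul_nonneg hs' (mul_nonneg hs' hs')),
      mul_nonneg hn hn, mul_nonneg hs' hs']
  · obtain ⟨m, hm⟩ : ∃ m, n = k + 1 + m := ⟨n - k - 1, by omega⟩
    subst hm
    have hm' : (0:ℝ) ≤ (m:ℝ) := Nat.cast_nonneg m
    have hk' : (2:ℝ) ≤ (k:ℝ) := by exact_mod_cast hk
    push_cast
    nlinarith [mul_nonneg hm' hm', mul_nonneg (mul_nonneg hm' hm') hm',
      mul_nonneg (sub_nonneg.mpr hk') (mul_nonneg (mul_nonneg hm' hm') hm'),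
      mul_nonneg (sub_nonneg.mpr hk') (mul_nonneg hm' hm'),
      mul_nonneg (sub_nonneg.mpr hk') hm', sq_nonneg ((k:ℝ)*((m:ℝ)+1))]

section Graph
variable {V : Type*} [Fintype V] (G : SimpleGraph V)

private lemma edges_in_eq (C : Finset V) :
    {e ∈ G.edgeSet | ∀ v ∈ e, v ∈ C} =
      Sym2.map (fun x : (C:Set V) => (x : V)) '' (G.induce (C:Set V)).edgeSet := by
  ext e
  induction e using Sym2.ind with
  | _ a b =>
    simp only [Set.mem_setOf_eq, Set.mem_image, mem_edgeSet, Sym2.mem_iff]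
    constructor
    · rintro ⟨hab, h⟩
      have ha : a ∈ C := h a (Or.inl rfl)
      have hb : b ∈ C := h b (Or.inr rfl)
      refine ⟨s(⟨a, ha⟩, ⟨b, hb⟩), ?_, by simp [Sym2.map_pair_eq]⟩
      simpa using hab
    · rintro ⟨e', he', heq⟩
      induction e' using Sym2.ind with
      | _ x y =>
        rw [Sym2.map_pair_eq] at heq
        have hxy : G.Adj (x:V) (y:V) := by simpa using he'
        rw [Sym2.eq_iff] at heq
        rcases heq with ⟨hx, hy⟩ | ⟨hx, hy⟩
        · subst hx; subst hy
          exact ⟨hxy, fun v hv => by rcases hv with h | h <;> subst h <;> simp⟩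
        · subst hx; subst hy
          exact ⟨hxy.symm, fun v hv => by rcases hv with h | h <;> subst h <;> simp⟩

private lemma ncard_edges_in (C : Finset V) :
    {e ∈ G.edgeSet | ∀ v ∈ e, v ∈ C}.ncard = (G.induce (C:Set V)).edgeSet.ncard := by
  rw [edges_in_eq,
    Set.ncard_image_of_injective _ (Sym2.map.injective Subtype.val_injective)]

private lemma ncard_le_choose (C : Finset V) :
    {e ∈ G.edgeSet | ∀ v ∈ e, v ∈ C}.ncard ≤ C.card.choose 2 := by
  classical
  rw [ncard_edges_in, ← coe_edgeFinset, Set.ncard_coe_finset]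
  have := (G.induce (C:Set V)).card_edgeFinset_le_card_choose_two
  simpa [Fintype.card_coe] using this

private lemma clique_of_ncard_eq (C : Finset V)
    (h : {e ∈ G.edgeSet | ∀ v ∈ e, v ∈ C}.ncard = C.card.choose 2) :
    G.IsClique (C : Set V) := by
  classical
  rw [ncard_edges_in, ← coe_edgeFinset, Set.ncard_coe_finset] at h
  have hsub : (G.induce (C:Set V)).edgeFinset ⊆ (⊤ : SimpleGraph (C:Set V)).edgeFinset :=
    edgeFinset_mono le_top
  have hcard : #(⊤ : SimpleGraph (C:Set V)).edgeFinset ≤ #(G.induce (C:Set V)).edgeFinset := by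
    rw [card_edgeFinset_top_eq_card_choose_two, h]
    simp [Fintype.card_coe]
  have htop : G.induce (C:Set V) = ⊤ :=
    edgeFinset_inj.mp (Finset.eq_of_subset_of_card_le hsub hcard)
  intro u hu v hv huv
  have hne : (⟨u, hu⟩ : (C:Set V)) ≠ ⟨v, hv⟩ := by
    simp only [ne_eq, Subtype.mk.injEq]; exact huv
  have : (G.induce (C:Set V)).Adj ⟨u, hu⟩ ⟨v, hv⟩ := by
    rw [htop]; exact hne
  simpa using this

private lemma ncard_of_clique (C : Finset V) (h : G.IsClique (C : Set V)) :
    {e ∈ G.edgeSet | ∀ v ∈ e, v ∈ C}.ncard = C.card.choose 2 := by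
  classical
  have htop : G.induce (C:Set V) = ⊤ := by
    ext a b
    simp only [comap_adj, Function.Embedding.coe_subtype, top_adj]
    constructor
    · intro hab
      exact fun hab' => (G.ne_of_adj hab) (by rw [hab'])
    · intro hab
      exact h a.2 b.2 (fun h' => hab (Subtype.ext h'))
  rw [ncard_edges_in, htop, ← coe_edgeFinset, Set.ncard_coe_finset,
    card_edgeFinset_top_eq_card_choose_two]
  simp [Fintype.card_coe]

end Graph

theorem stmt_16 {V : Type*} [Fintype V] (G : SimpleGraph V) (k : ℕ) (hk : 2 ≤ k)
    (W : Finset V → ℝ)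
    (hW : ∀ C : Finset V, W C =
      (1 - (C.card : ℝ) * (2 * (k:ℝ) - 1) / ((k:ℝ) * (3 * (k:ℝ) - 2))) *
        ({e ∈ G.edgeSet | ∀ v ∈ e, v ∈ C}.ncard : ℝ)) :
    (∃ C : Finset V, (∀ C' : Finset V, W C' ≤ W C) ∧
        W C = (k:ℝ) * ((k:ℝ) - 1) ^ 2 / (6 * (k:ℝ) - 4)) ↔
      ∃ S : Finset V, S.card = k ∧ G.IsClique (S : Set V) := by
  classical
  have hK : (2:ℝ) ≤ (k:ℝ) := by exact_mod_cast hk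
  set K : ℝ := (k:ℝ) with hKdef
  have hKpos : 0 < K := by linarith
  have hD : 0 < K * (3*K - 2) := by nlinarith
  have h64 : 0 < 6*K - 4 := by linarith
  set R : ℝ := K * (K - 1)^2 / (6*K - 4) with hRdef
  have hRpos : 0 < R := by
    apply div_pos _ h64
    nlinarith [sq_nonneg (K-1)]
  have h2RD : 2 * R * (K * (3*K - 2)) = K^2 * (K-1)^2 := by
    have hR6 : R * (6*K - 4) = K * (K - 1)^2 := by
      rw [hRdef]; exact div_mul_cancel₀ _ h64.ne'
    linear_combination K * hR6
  -- upper bound for every coalition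
  have Wle : ∀ C : Finset V, W C ≤ R := by
    intro C
    rw [hW C]
    set x : ℝ := (C.card : ℝ) with hx
    set E : ℝ := ({e ∈ G.edgeSet | ∀ v ∈ e, v ∈ C}.ncard : ℝ) with hE
    have hE0 : 0 ≤ E := Nat.cast_nonneg _
    have hEle : E ≤ x * (x - 1) / 2 := by
      have h1 := ncard_le_choose G C
      have h2 : (({e ∈ G.edgeSet | ∀ v ∈ e, v ∈ C}.ncard : ℝ)) ≤ ((C.card.choose 2 : ℕ) : ℝ) := by
        exact_mod_cast h1
      rwa [Nat.cast_choose_two] at h2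
    have hcoef : 1 - x * (2*K - 1) / (K * (3*K - 2)) = (K * (3*K-2) - x*(2*K-1)) / (K * (3*K-2)) := by
      rw [eq_div_iff hD.ne', sub_mul, div_mul_cancel₀ _ hD.ne', one_mul]
    rw [hcoef, div_mul_eq_mul_div, div_le_iff₀ hD]
    rcases le_or_gt (K * (3*K-2) - x*(2*K-1)) 0 with hc | hc
    · have : (K * (3*K-2) - x*(2*K-1)) * E ≤ 0 := mul_nonpos_of_nonpos_of_nonneg hc hE0
      nlinarith [mul_pos hRpos hD]
    · have hkey := key_le k C.card hk
      nlinarith [mul_le_mul_of_nonneg_left hEle hc.le]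
  constructor
  · rintro ⟨C, _, hCR⟩
    set x : ℝ := (C.card : ℝ) with hx
    set E : ℝ := ({e ∈ G.edgeSet | ∀ v ∈ e, v ∈ C}.ncard : ℝ) with hE
    have hE0 : 0 ≤ E := Nat.cast_nonneg _
    have hEle : E ≤ x * (x - 1) / 2 := by
      have h1 := ncard_le_choose G C
      have h2 : (({e ∈ G.edgeSet | ∀ v ∈ e, v ∈ C}.ncard : ℕ) : ℝ) ≤ ((C.card.choose 2 : ℕ) : ℝ) := by
        exact_mod_cast h1
      rw [Nat.cast_choose_two] at h2
      exact h2
    have hWC : (1 - x * (2*K - 1) / (K * (3*K - 2))) * E = R := by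
      rw [← hCR, hW C]
    have hcoef : 1 - x * (2*K - 1) / (K * (3*K - 2)) = (K * (3*K-2) - x*(2*K-1)) / (K * (3*K-2)) := by
      rw [eq_div_iff hD.ne', sub_mul, div_mul_cancel₀ _ hD.ne', one_mul]
    rw [hcoef, div_mul_eq_mul_div, div_eq_iff (ne_of_gt hD)] at hWC
    -- the coefficient must be positive
    have hc : 0 < K * (3*K-2) - x*(2*K-1) := by
      by_contra hcon
      push_neg at hcon
      have h1 : (K * (3*K-2) - x*(2*K-1)) * E ≤ 0 := mul_nonpos_of_nonpos_of_nonneg hcon hE0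
      have h2 : 0 < R * (K * (3*K - 2)) := mul_pos hRpos hD
      linarith [hWC]
    -- the coalition has exactly k members
    have hnk : C.card = k := by
      by_contra hne
      have hkey := key_lt k C.card hk hne
      have h1 : (K * (3*K-2) - x*(2*K-1)) * E ≤ (K * (3*K-2) - x*(2*K-1)) * (x * (x-1) / 2) :=
        mul_le_mul_of_nonneg_left hEle hc.le
      nlinarith [hWC, h2RD]
    have hxK : x = K := by rw [hx, hnk]
    -- and it has the maximal number of internal edges
    have hE' : K * (K - 1) * E = R * (K * (3*K - 2)) := by
      rw [hxK] at hWC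
      linear_combination hWC
    have hKK : (0:ℝ) < K * (K - 1) := by nlinarith
    have hEeq : E = K * (K - 1) / 2 := by
      apply mul_left_cancel₀ (ne_of_gt hKK)
      linear_combination hE' + h2RD / 2
    have hncard : {e ∈ G.edgeSet | ∀ v ∈ e, v ∈ C}.ncard = C.card.choose 2 := by
      have hcast : (({e ∈ G.edgeSet | ∀ v ∈ e, v ∈ C}.ncard : ℕ) : ℝ) = ((C.card.choose 2 : ℕ) : ℝ) := by
        rw [Nat.cast_choose_two, ← hE, ← hx, hEeq, hxK]
      exact_mod_cast hcast
    exact ⟨C, hnk, clique_of_ncard_eq G C hncard⟩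
  · rintro ⟨S, hScard, hSclique⟩
    refine ⟨S, ?_, ?_⟩
    · intro C'
      calc W C' ≤ R := Wle C'
        _ = W S := ?_
      rw [hW S, ncard_of_clique G S hSclique, hScard, Nat.cast_choose_two, ← hKdef]
      have hK0 : K ≠ 0 := ne_of_gt hKpos
      have h32 : (3*K - 2) ≠ 0 := by linarith
      have h64' : (6*K - 4) ≠ 0 := ne_of_gt h64
      rw [hRdef]
      have ht' : K * (2*K - 1) / (K * (3*K - 2)) * (K * (3*K - 2)) = K * (2*K - 1) := div_mul_cancel₀ _ hD.ne'
      rw [div_eq_iff h64']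
      linear_combination (K - 1) * ht'
    · rw [hW S, ncard_of_clique G S hSclique, hScard, Nat.cast_choose_two, ← hKdef]
      have hK0 : K ≠ 0 := ne_of_gt hKpos
      have h32 : (3*K - 2) ≠ 0 := by linarith
      have h64' : (6*K - 4) ≠ 0 := ne_of_gt h64
      rw [eq_div_iff h64']
      have ht' : K * (2*K - 1) / (K * (3*K - 2)) * (K * (3*K - 2)) = K * (2*K - 1) := div_mul_cancel₀ _ hD.ne'
      linear_combination (1 - K) * ht'
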